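/- Let $q$ be the characteristic exponent of a one-dimensional Lévy process $L$, and suppose $\mathrm{Re}\, q(2\pi k/\tau) > 0$ for all $k \in \mathbb{Z}\setminus\{0\}$. Let $f_\tau$ be a bounded measurable $\tau$-periodic function satisfying $\mathbb{E}^x[f_\tau(L_t)] = f_\tau(x)$ for all $x \in \mathbb{R}$ and $t \ge 0$. Then $f_\tau$ is Lebesgue-a.e. constant. Consequently, the projection $L^\tau$ of $L$ on the torus $\mathbb{R}/\tau\mathbb{Z}$ is ergodic with respect to normalized Lebesgue measure. -/

import Mathlib

open MeasureTheory Real Set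

/-- Bounded measurable functions are integrable w.r.t. a finite measure. -/
lemma levyAux.integrable_of_bound {α : Type*} [MeasurableSpace α] {ν : Measure α}
    [IsFiniteMeasure ν] {g : α → ℂ} (hg : Measurable g) (C : ℝ) (hC : ∀ a, ‖g a‖ ≤ C) :
    Integrable g ν :=
  (integrable_const C).mono' hg.aestronglyMeasurable (Filter.Eventually.of_forall hC)

/-- Key Fourier coefficient computation. -/
lemma levyAux.coeff_zero
    (τ : ℝ) (hτ : 0 < τ)
    (μ : ℝ → Measure ℝ) (hμ : ∀ t, IsProbabilityMeasure (μ t))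
    (q : ℝ → ℂ)
    (hchar : ∀ t : ℝ, 0 ≤ t → ∀ ξ : ℝ,
      ∫ y, Complex.exp (Complex.I * ((ξ * y : ℝ) : ℂ)) ∂(μ t)
        = Complex.exp (-(t : ℂ) * q ξ))
    (hq : ∀ k : ℤ, k ≠ 0 → 0 < (q (2 * π * k / τ)).re)
    (f : ℝ → ℝ) (hfmeas : Measurable f) (M : ℝ) (hfb : ∀ x, |f x| ≤ M)
    (hper : Function.Periodic f τ)
    (hharm : ∀ (x : ℝ) (t : ℝ), 0 ≤ t → ∫ y, f (x + y) ∂(μ t) = f x)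
    (n : ℤ) (hn : n ≠ 0) :
    ∫ x in (0:ℝ)..τ, Complex.exp (Complex.I * (((-(2 * π * n / τ)) * x : ℝ) : ℂ)) * (f x : ℂ) = 0 := by
  haveI := hμ 1
  set ξ : ℝ := 2 * π * n / τ with hξ
  set en : ℝ → ℂ := fun x => Complex.exp (Complex.I * (((-ξ) * x : ℝ) : ℂ)) with hen
  set eb : ℝ → ℂ := fun y => Complex.exp (Complex.I * ((ξ * y : ℝ) : ℂ)) with heb
  set c : ℂ := ∫ x in (0:ℝ)..τ, en x * (f x : ℂ) with hc
  -- basic facts about en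
  have hen_meas : Measurable en := by fun_prop
  have hen_norm : ∀ x, ‖en x‖ = 1 := by
    intro x
    rw [hen]
    simp only []
    rw [mul_comm, Complex.norm_exp_ofReal_mul_I]
  have hen_mul : ∀ x y : ℝ, en (x + y) * eb y = en x := by
    intro x y
    rw [hen, heb]
    simp only []
    rw [← Complex.exp_add]
    congr 1
    push_cast
    ring
  have hφper : Function.Periodic (fun u : ℝ => en u * (f u : ℂ)) τ := by
    intro u
    have h1 : en (u + τ) = en u := by
      have : en (u + τ) = en u * Complex.exp ((-n : ℤ) * (2 * (π : ℂ) * Complex.I)) := by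
        rw [hen]; simp only []
        rw [← Complex.exp_add]
        congr 1
        have hτ0 : (τ : ℂ) ≠ 0 := Complex.ofReal_ne_zero.mpr hτ.ne'
        rw [hξ]
        push_cast
        field_simp
        ring
      rw [this, Complex.exp_int_mul_two_pi_mul_I, mul_one]
    simp only [h1, hper u]
  -- harmonicity step
  have step1 : c = ∫ x in (0:ℝ)..τ, ∫ y, en x * (f (x + y) : ℂ) ∂(μ 1) := by
    rw [hc]
    apply intervalIntegral.integral_congr
    intro x _
    show en x * (f x : ℂ) = ∫ y, en x * (f (x + y) : ℂ) ∂(μ 1)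
    rw [integral_const_mul]
    have hir : ∫ a, ((f (x + a) : ℝ) : ℂ) ∂(μ 1) = ((∫ a, f (x + a) ∂(μ 1) : ℝ) : ℂ) :=
      integral_ofReal
    rw [hir, hharm x 1 zero_le_one]
  -- Fubini
  have hswap : ∫ x in Ioc (0:ℝ) τ, ∫ y, en x * (f (x + y) : ℂ) ∂(μ 1)
      = ∫ y, ∫ x in Ioc (0:ℝ) τ, en x * (f (x + y) : ℂ) ∂(volume) ∂(μ 1) := by
    haveI : IsFiniteMeasure (volume.restrict (Ioc (0:ℝ) τ)) := by
      constructor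
      rw [Measure.restrict_apply_univ, Real.volume_Ioc]
      exact ENNReal.ofReal_lt_top
    apply integral_integral_swap
    apply levyAux.integrable_of_bound (C := |M|)
    · exact (hen_meas.comp measurable_fst).mul
        ((Complex.measurable_ofReal.comp (hfmeas.comp measurable_add)))
    · rintro ⟨x, y⟩
      simp only [Function.uncurry]
      rw [norm_mul, hen_norm, one_mul, Complex.norm_real, Real.norm_eq_abs]
      exact (hfb _).trans (le_abs_self M)
  -- inner integral
  have inner : ∀ y : ℝ, ∫ x in (0:ℝ)..τ, en x * (f (x + y) : ℂ) = eb y * c := by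
    intro y
    have h1 : ∀ x : ℝ, en x * (f (x + y) : ℂ) = eb y * (en (x + y) * (f (x + y) : ℂ)) := by
      intro x
      rw [← hen_mul x y]; ring
    simp_rw [h1]
    rw [intervalIntegral.integral_const_mul]
    congr 1
    rw [intervalIntegral.integral_comp_add_right (fun u => en u * (f u : ℂ)) y]
    rw [zero_add, hc]
    have := hφper.intervalIntegral_add_eq y 0
    rw [zero_add] at this
    rw [add_comm τ y]
    exact this
  -- combine
  have key : c = Complex.exp (-(1 : ℂ) * q ξ) * c := by
    calc c = ∫ x in (0:ℝ)..τ, ∫ y, en x * (f (x + y) : ℂ) ∂(μ 1) := step1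
    _ = ∫ y, ∫ x in Ioc (0:ℝ) τ, en x * (f (x + y) : ℂ) ∂(volume) ∂(μ 1) := by
        rw [intervalIntegral.integral_of_le hτ.le]; exact hswap
    _ = ∫ y, eb y * c ∂(μ 1) := by
        refine integral_congr_ae (Filter.Eventually.of_forall fun y => ?_)
        show ∫ x in Ioc (0:ℝ) τ, en x * (f (x + y) : ℂ) = eb y * c
        rw [← intervalIntegral.integral_of_le hτ.le]
        exact inner y
    _ = (∫ y, eb y ∂(μ 1)) * c := by rw [← integral_mul_const]
    _ = Complex.exp (-(1 : ℂ) * q ξ) * c := by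
        rw [heb, hchar 1 zero_le_one ξ]; norm_num
  -- conclude c = 0
  have hne : Complex.exp (-(1 : ℂ) * q ξ) ≠ 1 := by
    intro h
    have : ‖Complex.exp (-(1 : ℂ) * q ξ)‖ = 1 := by rw [h, norm_one]
    rw [Complex.norm_exp] at this
    have hre : (-(1 : ℂ) * q ξ).re = -(q ξ).re := by simp
    rw [hre] at this
    have := Real.exp_lt_one_iff.mpr (neg_neg_iff_pos.mpr (hq n hn))
    · linarith [this]
  have : (1 - Complex.exp (-(1 : ℂ) * q ξ)) * c = 0 := by rw [sub_mul, one_mul, ← key, sub_self]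
  rcases mul_eq_zero.mp this with h | h
  · exact absurd (sub_eq_zero.mp h).symm hne
  · exact h


set_option maxHeartbeats 2000000 in
/-- For a one-dimensional Lévy process with characteristic
exponent `q` satisfying `Re q(2πk/τ) > 0` for all nonzero integers `k`, every
bounded measurable `τ`-periodic harmonic function is Lebesgue-a.e. constant
(ergodicity of the projection on the torus `ℝ/τℤ`). -/
theorem levy_torus_ergodic_harmonic_constant
    (τ : ℝ) (hτ : 0 < τ)
    (μ : ℝ → Measure ℝ) (hμ : ∀ t, IsProbabilityMeasure (μ t))
    (q : ℝ → ℂ)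
    (hchar : ∀ t : ℝ, 0 ≤ t → ∀ ξ : ℝ,
      ∫ y, Complex.exp (Complex.I * ((ξ * y : ℝ) : ℂ)) ∂(μ t)
        = Complex.exp (-(t : ℂ) * q ξ))
    (hq : ∀ k : ℤ, k ≠ 0 → 0 < (q (2 * π * k / τ)).re)
    (f : ℝ → ℝ) (hfmeas : Measurable f) (M : ℝ) (hfb : ∀ x, |f x| ≤ M)
    (hper : Function.Periodic f τ)
    (hharm : ∀ (x : ℝ) (t : ℝ), 0 ≤ t → ∫ y, f (x + y) ∂(μ t) = f x) :
    ∃ cst : ℝ, ∀ᵐ x ∂(volume : Measure ℝ), f x = cst := by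
  have haux : ∀ (n : ℤ), n ≠ 0 →
      ∫ x in (0:ℝ)..τ, Complex.exp (Complex.I * (((-(2 * π * n / τ)) * x : ℝ) : ℂ)) * (f x : ℂ) = 0 :=
    levyAux.coeff_zero τ hτ μ hμ q hchar hq f hfmeas M hfb hper hharm
  haveI : Fact (0 < τ) := ⟨hτ⟩
  set f₀ : ℝ → ℂ := fun x => (f x : ℂ) with hf₀
  set F : AddCircle τ → ℂ := AddCircle.liftIoc τ 0 f₀ with hFdef
  -- F ∘ mk = f₀
  have hF : ∀ x : ℝ, F (x : AddCircle τ) = f₀ x := by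
    intro x
    have h2 : ((toIocMod hτ 0 x : ℝ) : AddCircle τ) = (x : AddCircle τ) := by
      rw [← self_sub_toIocDiv_zsmul hτ 0 x, AddCircle.coe_sub, AddCircle.coe_zsmul,
        AddCircle.coe_period, smul_zero, sub_zero]
    have h1 : toIocMod hτ 0 x ∈ Ioc 0 (0 + τ) := toIocMod_mem_Ioc hτ 0 x
    calc F (x : AddCircle τ) = F ((toIocMod hτ 0 x : ℝ) : AddCircle τ) := by rw [h2]
    _ = f₀ (toIocMod hτ 0 x) := AddCircle.liftIoc_coe_apply h1
    _ = f₀ x := by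
        rw [hf₀]
        simp only []
        rw [← self_sub_toIocDiv_zsmul hτ 0 x, hper.sub_zsmul_eq]
  have hFmeas : Measurable F :=
    ((Complex.measurable_ofReal.comp hfmeas).comp measurable_subtype_coe).comp
      (AddCircle.measurableEquivIoc τ 0).measurable
  have hFb : ∀ z, ‖F z‖ ≤ |M| := by
    intro z
    show ‖f₀ ((AddCircle.equivIoc τ 0 z : ℝ))‖ ≤ |M|
    rw [hf₀]
    simp only [Complex.norm_real, Real.norm_eq_abs]
    exact (hfb _).trans (le_abs_self M)
  -- vanishing of nonzero Fourier coefficients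
  have hcoeff : ∀ n : ℤ, n ≠ 0 → fourierCoeff F n = 0 := by
    intro n hn
    rw [fourierCoeff_eq_intervalIntegral F n 0, zero_add]
    have : (∫ x in (0:ℝ)..τ, fourier (-n) (x : AddCircle τ) • F x)
        = ∫ x in (0:ℝ)..τ, Complex.exp (Complex.I * (((-(2 * π * n / τ)) * x : ℝ) : ℂ)) * (f x : ℂ) := by
      apply intervalIntegral.integral_congr
      intro x _
      show fourier (-n) (x : AddCircle τ) • F (x : AddCircle τ)
          = Complex.exp (Complex.I * (((-(2 * π * n / τ)) * x : ℝ) : ℂ)) * (f x : ℂ)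
      rw [hF x, smul_eq_mul, fourier_coe_apply]
      congr 1
      congr 1
      push_cast
      field_simp
    rw [this, haux n hn, smul_zero]
  -- remove the mean
  set c₀ : ℂ := fourierCoeff F 0 with hc₀
  set g : AddCircle τ → ℂ := fun z => F z - c₀ with hg
  have hgmeas : Measurable g := hFmeas.sub measurable_const
  have hgb : ∀ z, ‖g z‖ ≤ |M| + ‖c₀‖ := fun z =>
    (norm_sub_le _ _).trans (add_le_add (hFb z) le_rfl)
  have hint : ∀ (h : AddCircle τ → ℂ) (C : ℝ), Measurable h → (∀ z, ‖h z‖ ≤ C) →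
      ∀ n : ℤ, Integrable (fun t => fourier (-n) t • h t) AddCircle.haarAddCircle := by
    intro h C hh hC n
    apply (integrable_const C).mono'
    · exact ((map_continuous (fourier (-n))).measurable.smul hh).aestronglyMeasurable
    · refine Filter.Eventually.of_forall fun t => ?_
      rw [norm_smul]
      calc ‖fourier (-n) t‖ * ‖h t‖ ≤ 1 * C := by
            apply mul_le_mul _ (hC t) (norm_nonneg _) zero_le_one
            rw [fourier_apply, Circle.norm_coe]
      _ = C := one_mul C
  have hgcoeff : ∀ n : ℤ, fourierCoeff g n = 0 := by
    intro n
    have hsplit : fourierCoeff g n = fourierCoeff F n - fourierCoeff (fun _ : AddCircle τ => c₀) n := by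
      rw [fourierCoeff, fourierCoeff, fourierCoeff]
      rw [← integral_sub (hint F |M| hFmeas hFb n) (hint (fun _ => c₀) ‖c₀‖ measurable_const (fun _ => le_rfl) n)]
      congr 1
      ext t
      rw [hg]
      simp only []
      rw [smul_sub]
    rcases eq_or_ne n 0 with rfl | hn
    · rw [hsplit]
      have h1 : fourierCoeff (fun _ : AddCircle τ => c₀) 0 = c₀ := by
        rw [fourierCoeff]
        simp only [neg_zero, fourier_zero, one_smul]
        rw [integral_const, probReal_univ, one_smul]
      rw [h1, ← hc₀, sub_self]
    · rw [hsplit, hcoeff n hn]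
      have h1 : fourierCoeff (fun _ : AddCircle τ => c₀) n = 0 := by
        have := fourierCoeff.const_mul (T := τ) (fun _ => (1 : ℂ)) c₀ n
        simp only [mul_one] at this
        rw [this]
        have h2 : fourierCoeff (fun _ : AddCircle τ => (1 : ℂ)) n = 0 := by
          rw [fourierCoeff_eq_intervalIntegral _ n 0, zero_add]
          have h3 : (∫ x in (0:ℝ)..τ, fourier (-n) (x : AddCircle τ) • (1 : ℂ))
              = ∫ x in (0:ℝ)..τ, Complex.exp ((2 * π * Complex.I * (-n) / τ) * x) := by
            apply intervalIntegral.integral_congr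
            intro x _
            show fourier (-n) (x : AddCircle τ) • (1 : ℂ) = _
            rw [smul_eq_mul, mul_one, fourier_coe_apply]
            congr 1
            push_cast
            ring
          rw [h3, integral_exp_mul_complex]
          · have h4 : Complex.exp (2 * π * Complex.I * (-n) / τ * τ) = 1 := by
              have hτ0 : (τ : ℂ) ≠ 0 := Complex.ofReal_ne_zero.mpr hτ.ne'
              have h5 : (2 * π * Complex.I * (-n) / τ) * τ = (-n : ℤ) * (2 * π * Complex.I) := by
                rw [div_mul_cancel₀ _ hτ0]
                push_cast
                ring
              rw [h5, Complex.exp_int_mul_two_pi_mul_I]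
            rw [h4]
            norm_num
          · have hτ0 : (τ : ℂ) ≠ 0 := Complex.ofReal_ne_zero.mpr hτ.ne'
            have hπ : (π : ℂ) ≠ 0 := Complex.ofReal_ne_zero.mpr Real.pi_ne_zero
            have hn' : (n : ℂ) ≠ 0 := Int.cast_ne_zero.mpr hn
            apply div_ne_zero _ hτ0
            simp [mul_eq_zero, hπ, hn', Complex.I_ne_zero, Real.pi_ne_zero]
        rw [h2, mul_zero]
      rw [h1, sub_self]
  -- Parseval: g = 0 a.e.
  have hgmem : MemLp g 2 AddCircle.haarAddCircle :=
    MemLp.of_bound hgmeas.aestronglyMeasurable (|M| + ‖c₀‖)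
      (Filter.Eventually.of_forall hgb)
  set G := hgmem.toLp g with hG
  have hGcoe : (G : AddCircle τ → ℂ) =ᵐ[AddCircle.haarAddCircle] g := hgmem.coeFn_toLp
  have hGcoeff : ∀ n : ℤ, fourierCoeff (G : AddCircle τ → ℂ) n = 0 := by
    intro n
    rw [← hgcoeff n, fourierCoeff, fourierCoeff]
    apply integral_congr_ae
    filter_upwards [hGcoe] with t ht
    rw [ht]
  have hpars := tsum_sq_fourierCoeff G
  have hL2zero : ∫ t, ‖(G : AddCircle τ → ℂ) t‖ ^ 2 ∂AddCircle.haarAddCircle = 0 := by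
    rw [← hpars]
    simp only [hGcoeff]
    simp
  have hGzero : ∀ᵐ t ∂AddCircle.haarAddCircle, (G : AddCircle τ → ℂ) t = 0 := by
    have hnn : 0 ≤ᵐ[AddCircle.haarAddCircle] fun t => ‖(G : AddCircle τ → ℂ) t‖ ^ 2 :=
      Filter.Eventually.of_forall fun t => sq_nonneg _
    have hi : Integrable (fun t => ‖(G : AddCircle τ → ℂ) t‖ ^ 2) AddCircle.haarAddCircle := by
      apply (integrable_const ((|M| + ‖c₀‖) ^ 2)).mono'
      · exact ((Lp.aestronglyMeasurable G).norm.pow 2)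
      · filter_upwards [hGcoe] with t ht
        rw [Real.norm_eq_abs, abs_of_nonneg (sq_nonneg _), ht]
        have h0 : (0:ℝ) ≤ |M| + ‖c₀‖ := by positivity
        exact pow_le_pow_left₀ (norm_nonneg _) (hgb t) 2
    have := (integral_eq_zero_iff_of_nonneg_ae hnn hi).mp hL2zero
    filter_upwards [this] with t ht
    have : ‖(G : AddCircle τ → ℂ) t‖ ^ 2 = 0 := ht
    have := pow_eq_zero_iff (n := 2) (by norm_num) |>.mp this
    exact norm_eq_zero.mp this
  have hFae : ∀ᵐ z ∂AddCircle.haarAddCircle, F z = c₀ := by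
    filter_upwards [hGcoe, hGzero] with z h1 h2
    have : g z = 0 := by rw [← h1, h2]
    rw [hg] at this
    simpa [sub_eq_zero] using this
  -- pull back to ℝ
  set N : Set (AddCircle τ) := {z | F z ≠ c₀} with hN
  have hNmeas : MeasurableSet N := (measurableSet_eq_fun hFmeas measurable_const).compl
  have hNhaar : AddCircle.haarAddCircle N = 0 := by
    rw [hN]
    exact hFae
  have hNvol : (volume : Measure (AddCircle τ)) N = 0 := by
    rw [AddCircle.volume_eq_smul_haarAddCircle, Measure.smul_apply, hNhaar, smul_zero]
  have hpull : volume ((QuotientAddGroup.mk ⁻¹' N : Set ℝ) ∩ Ioc 0 (0 + τ)) = 0 := by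
    rw [← AddCircle.add_projection_respects_measure (T := τ) 0 hNmeas]
    exact hNvol
  set cst : ℝ := c₀.re with hcst
  refine ⟨cst, ?_⟩
  set A : Set ℝ := {x | f x ≠ cst} with hA
  have hsub : A ∩ Ioc 0 τ ⊆ (QuotientAddGroup.mk ⁻¹' N : Set ℝ) ∩ Ioc 0 (0 + τ) := by
    rintro x ⟨hxA, hxI⟩
    refine ⟨?_, by rwa [zero_add]⟩
    show F (x : AddCircle τ) ≠ c₀
    rw [hF x]
    intro hcon
    apply hxA
    have := congrArg Complex.re hcon
    rwa [hf₀] at this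
  have hbase : volume (A ∩ Ioc 0 τ) = 0 := measure_mono_null hsub hpull
  have hslices : ∀ k : ℤ, volume (A ∩ Ioc (k • τ) (k • τ + τ)) = 0 := by
    intro k
    have hsub2 : A ∩ Ioc (k • τ) (k • τ + τ) ⊆ (fun x => x + -(k • τ)) ⁻¹' (A ∩ Ioc 0 τ) := by
      rintro x ⟨hxA, hxI⟩
      constructor
      · show f (x + -(k • τ)) ≠ cst
        have : f (x + -(k • τ)) = f x := by
          rw [← sub_eq_add_neg, hper.sub_zsmul_eq]
        rwa [this]
      · rw [mem_Ioc] at hxI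
        constructor
        · show (0:ℝ) < x + -(k • τ)
          linarith [hxI.1]
        · show x + -(k • τ) ≤ τ
          linarith [hxI.2]
    apply measure_mono_null hsub2
    rw [measure_preimage_add_right]
    exact hbase
  have hcover : A ⊆ ⋃ k : ℤ, A ∩ Ioc (k • τ) (k • τ + τ) := by
    intro x hx
    have hmem := toIocMod_mem_Ioc hτ 0 x
    rw [← self_sub_toIocDiv_zsmul hτ 0 x, mem_Ioc, zero_add] at hmem
    refine mem_iUnion.mpr ⟨toIocDiv hτ 0 x, hx, ?_, ?_⟩
    · linarith [hmem.1]
    · linarith [hmem.2]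
  rw [ae_iff]
  exact measure_mono_null hcover (measure_iUnion_null hslices)
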